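/- The functor P̄ has no nonzero polynomial subfunctors: if A ⊆ P̄ is a subfunctor with Δ^{m+1}A = 0 for some m ≥ 0, then A = 0. Equivalently, p_n P̄ = 0 for all n ≥ 0. -/

import Mathlib

open CategoryTheory CategoryTheory.Limits TensorProduct MonoidalCategory

noncomputable section

variable (p : ℕ) [Fact p.Prime]

/-- `k = F_p`. -/
abbrev Kk (p : ℕ) : Type := ZMod p

/-- The category `𝓕` of functors from finite-dimensional `F_p`-vector spaces
to `F_p`-vector spaces. -/
abbrev FF (p : ℕ) [Fact p.Prime] := FGModuleCat.{0} (Kk p) ⥤ ModuleCat.{0} (Kk p)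

/-- The functor `V ↦ V ⊕ k` on finite-dimensional vector spaces. -/
def addOne : FGModuleCat.{0} (Kk p) ⥤ FGModuleCat.{0} (Kk p) where
  obj V := FGModuleCat.of (Kk p) (V × Kk p)
  map f := FGModuleCat.ofHom (LinearMap.prodMap f.hom.hom (LinearMap.id) : _ →ₗ[Kk p] _)
  map_id := by intros; ext x <;> rfl
  map_comp := by intros; ext x <;> rfl

/-- The natural inclusion `i_V : V → V ⊕ k`. -/
def inclOne : 𝟭 (FGModuleCat.{0} (Kk p)) ⟶ addOne p where
  app V := FGModuleCat.ofHom (LinearMap.inl (Kk p) V (Kk p) : V →ₗ[Kk p] V × Kk p)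
  naturality := by intros; ext x; rfl

/-- The natural projection `V ⊕ k → V`. -/
def projOne : addOne p ⟶ 𝟭 (FGModuleCat.{0} (Kk p)) where
  app V := FGModuleCat.ofHom (LinearMap.fst (Kk p) V (Kk p) : V × Kk p →ₗ[Kk p] V)
  naturality := by intros; ext x; rfl

/-- Precomposition with `V ↦ V ⊕ k`, i.e. `F ↦ (V ↦ F(V ⊕ k))`. -/
def preAdd : FF p ⥤ FF p := (Functor.whiskeringLeft _ _ _).obj (addOne p)

/-- The natural transformation `F ⟶ F(− ⊕ k)` induced by the inclusions `i_V`. -/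
def unitPre : 𝟭 (FF p) ⟶ preAdd p where
  app F := Functor.whiskerRight (inclOne p) F
  naturality := by
    intro F G α
    ext V x
    exact congrArg (fun g => ModuleCat.Hom.hom g x) (α.naturality ((inclOne p).app V)).symm

/-- The difference functor `Δ : 𝓕 → 𝓕`, the cokernel of `F ⟶ F(− ⊕ k)`. -/
def Delta : FF p ⥤ FF p := cokernel (unitPre p)

/-- Iterates `Δ^n` of the difference functor. -/
def deltaIter : ℕ → (FF p ⥤ FF p)
  | 0 => 𝟭 (FF p)
  | n + 1 => deltaIter n ⋙ Delta p

/-- `F` is polynomial of degree at most `n` if `Δ^{n+1} F = 0`. -/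
def IsPolyLE (n : ℕ) (F : FF p) : Prop := IsZero ((deltaIter p (n + 1)).obj F)



/-- The forgetful functor, i.e. the identity functor `Id ∈ 𝓕`. -/
def idFun : FF p := forget₂ (FGModuleCat.{0} (Kk p)) (ModuleCat.{0} (Kk p))

/-- The constant functor with value `k`, i.e. the unit of `𝓕`. -/
def constK : FF p := (Functor.const _).obj (ModuleCat.of (Kk p) (Kk p))

/-- The functor `P ∈ 𝓕`, `V ↦ k[V]`. -/
def Pfun : FF p where
  obj V := ModuleCat.of (Kk p) ((V : Type) →₀ Kk p)
  map f := ModuleCat.ofHom (Finsupp.lmapDomain (Kk p) (Kk p) f.hom.hom)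
  map_id V := ModuleCat.hom_ext (Finsupp.lmapDomain_id _ _)
  map_comp f g := by
    apply ModuleCat.hom_ext
    apply Finsupp.lhom_ext
    intro a b
    simp [Finsupp.lmapDomain_apply, Finsupp.mapDomain_single]

/-- The augmentation `P ⟶ k`, `[v] ↦ 1`. -/
def augP : Pfun p ⟶ constK p where
  app V := ModuleCat.ofHom (Finsupp.linearCombination (Kk p) (fun _ : (V : Type) => (1 : Kk p)))
  naturality := by
    intro V W f
    apply ModuleCat.hom_ext
    apply Finsupp.lhom_ext
    intro a b
    simp only [Pfun, constK, ModuleCat.hom_comp, ModuleCat.hom_ofHom, Functor.const_obj_map,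
      ModuleCat.hom_id]
    erw [LinearMap.comp_apply, Finsupp.lmapDomain_apply, Finsupp.mapDomain_single,
      Finsupp.linearCombination_single, Finsupp.linearCombination_single]
    try simp


/-- The reduced functor `P̄ ∈ 𝓕`, the kernel of the augmentation `P ⟶ k`. -/
def Pbar : FF p := kernel (augP p)

/-- The functor `I_W ∈ 𝓕`, `V ↦ (functions Hom(V,W) → k)`. -/
def Ifun (W : FGModuleCat.{0} (Kk p)) : FF p where
  obj V := ModuleCat.of (Kk p) ((V →ₗ[Kk p] W) → Kk p)
  map {V V'} f := ModuleCat.ofHom (LinearMap.funLeft (Kk p) (Kk p)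
    (fun ℓ : (V' : Type _) →ₗ[Kk p] W => ℓ ∘ₗ (f.hom.hom : V →ₗ[Kk p] V')))
  map_id V := by ext φ; rfl
  map_comp f g := by ext φ; rfl

/-- The functor `I = I_k ∈ 𝓕`. -/
def Icfun : FF p := Ifun p (FGModuleCat.of (Kk p) (Kk p))

/-- Evaluation at the zero homomorphism, `I ⟶ k`. -/
def evalZero : Icfun p ⟶ constK p where
  app V := ModuleCat.ofHom (LinearMap.proj (0 : V →ₗ[Kk p] Kk p))
  naturality := by
    intro V W f
    ext φ
    have : (0 : (W : Type) →ₗ[Kk p] Kk p) ∘ₗ (f.hom.hom : V →ₗ[Kk p] W) = 0 := by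
      ext x; rfl
    exact congrArg φ this

/-- The reduced functor `Ī ∈ 𝓕` of functions vanishing at `0`. -/
def Ibar : FF p := kernel (evalZero p)


/-- The largest subspace of `F(V)` belonging to a subfunctor of `F` that is
polynomial of degree at most `n`; objectwise, this is the value `(p_n F)(V)`. -/
def pSub (n : ℕ) (F : FF p) (V : FGModuleCat.{0} (Kk p)) :
    Submodule (Kk p) (F.obj V) :=
  ⨆ (A : FF p) (j : A ⟶ F) (_ : Mono j) (_ : IsPolyLE p n A),
    LinearMap.range (j.app V).hom



namespace Stmt14

open CategoryTheory CategoryTheory.Limits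

variable (p : ℕ) [Fact p.Prime]

/-- Iterates of `addOne`. -/
def An : ℕ → (FGModuleCat.{0} (Kk p) ⥤ FGModuleCat.{0} (Kk p))
  | 0 => 𝟭 _
  | n + 1 => An n ⋙ addOne p

/-- The outermost inclusion `A^n V → A^{n+1} V`. -/
def iwhisk (n : ℕ) : An p n ⟶ An p (n + 1) where
  app V := (inclOne p).app ((An p n).obj V)
  naturality _ _ f := (inclOne p).naturality ((An p n).map f)

/-- The `n+1` coordinate inclusions `A^n V → A^{n+1} V`. -/
def ee : (n : ℕ) → Fin (n + 1) → (An p n ⟶ An p (n + 1))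
  | 0, _ => iwhisk p 0
  | n + 1, i =>
    if h : i = Fin.last (n + 1) then iwhisk p (n + 1)
    else Functor.whiskerRight (ee n (i.castPred h)) (addOne p)

lemma ee_last (n : ℕ) : ee p n (Fin.last n) = iwhisk p n := by
  cases n with
  | zero => rfl
  | succ n => simp [ee]

lemma ee_castSucc (n : ℕ) (i : Fin (n + 1)) :
    ee p (n + 1) i.castSucc = Functor.whiskerRight (ee p n i) (addOne p) := by
  have h : i.castSucc ≠ Fin.last (n + 1) := (Fin.castSucc_lt_last i).ne
  simp [ee, h]
  rfl

/-- Evaluation of endofunctors of `FF p` at `F` and `V`. -/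
def Ev (F : FF p) (V : FGModuleCat.{0} (Kk p)) :
    (FF p ⥤ FF p) ⥤ ModuleCat.{0} (Kk p) :=
  (evaluation (FF p) (FF p)).obj F ⋙ (evaluation _ _).obj V

/-- The cokernel projection of `Δ`, objectwise. -/
def qmap (F : FF p) (V : FGModuleCat.{0} (Kk p)) :
    F.obj ((addOne p).obj V) ⟶ ((Delta p).obj F).obj V :=
  ((cokernel.π (unitPre p)).app F).app V

example (F : FF p) (V : FGModuleCat.{0} (Kk p)) :
    qmap p F V = (Ev p F V).map (cokernel.π (unitPre p)) := rfl

example (F : FF p) (V : FGModuleCat.{0} (Kk p)) :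
    ((unitPre p).app F).app V = F.map ((inclOne p).app V) := rfl

end Stmt14
namespace Stmt14
open CategoryTheory CategoryTheory.Limits
variable (p : ℕ) [Fact p.Prime]

instance EvPZ (F : FF p) (V : FGModuleCat.{0} (Kk p)) :
    (Ev p F V).PreservesZeroMorphisms := by
  unfold Ev; infer_instance

instance EvPC (F : FF p) (V : FGModuleCat.{0} (Kk p)) :
    PreservesColimitsOfShape WalkingParallelPair (Ev p F V) := by
  unfold Ev; infer_instance

lemma qmap_comp_iso (F : FF p) (V : FGModuleCat.{0} (Kk p)) :
    qmap p F V ≫ (PreservesCokernel.iso (Ev p F V) (unitPre p)).hom =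
      cokernel.π ((Ev p F V).map (unitPre p)) := by
  have h := π_comp_cokernelComparison (unitPre p) (Ev p F V)
  rw [← PreservesCokernel.iso_inv] at h
  show (Ev p F V).map (cokernel.π (unitPre p)) ≫ _ = _
  rw [← h,
    Category.assoc, Iso.inv_hom_id, Category.comp_id]

/-- The composite iso to a quotient module. -/
def qiso (F : FF p) (V : FGModuleCat.{0} (Kk p)) :
    ((Delta p).obj F).obj V ≅
      ModuleCat.of (Kk p) (F.obj ((addOne p).obj V) ⧸ LinearMap.range (F.map ((inclOne p).app V)).hom) :=
  PreservesCokernel.iso (Ev p F V) (unitPre p) ≪≫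
    ModuleCat.cokernelIsoRangeQuotient ((Ev p F V).map (unitPre p))

lemma qmap_mkQ (F : FF p) (V : FGModuleCat.{0} (Kk p)) :
    qmap p F V ≫ (qiso p F V).hom =
      ModuleCat.ofHom (LinearMap.range (F.map ((inclOne p).app V)).hom).mkQ := by
  have h2 := ModuleCat.cokernel_π_cokernelIsoRangeQuotient_hom ((Ev p F V).map (unitPre p))
  rw [← qmap_comp_iso] at h2
  exact (Category.assoc (qmap p F V) (PreservesCokernel.iso (Ev p F V) (unitPre p)).hom
    (ModuleCat.cokernelIsoRangeQuotient ((Ev p F V).map (unitPre p))).hom).symm.trans h2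

lemma qmap_surjective (F : FF p) (V : FGModuleCat.{0} (Kk p)) :
    Function.Surjective (qmap p F V) := by
  intro y
  obtain ⟨x, hx⟩ := Submodule.mkQ_surjective _ ((qiso p F V).hom y)
  refine ⟨x, ?_⟩
  apply (ConcreteCategory.bijective_of_isIso (qiso p F V).hom).injective
  have h := ConcreteCategory.congr_hom (qmap_mkQ p F V) x
  rw [CategoryTheory.comp_apply] at h
  exact h.trans hx

lemma qmap_ker (F : FF p) (V : FGModuleCat.{0} (Kk p)) :
    LinearMap.ker (qmap p F V).hom = LinearMap.range (F.map ((inclOne p).app V)).hom := by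
  ext x
  have h := ConcreteCategory.congr_hom (qmap_mkQ p F V) x
  rw [CategoryTheory.comp_apply] at h
  constructor
  · intro hx
    have h0 : ((qiso p F V).hom) (qmap p F V x) = 0 := by
      rw [LinearMap.mem_ker.mp hx]; exact map_zero _
    rw [h] at h0
    exact (Submodule.Quotient.mk_eq_zero _).mp h0
  · intro hx
    have h0 : (LinearMap.range (F.map ((inclOne p).app V)).hom).mkQ x = 0 :=
      (Submodule.Quotient.mk_eq_zero _).mpr hx
    have := (ConcreteCategory.bijective_of_isIso (qiso p F V).hom).injective
      ((h.trans h0).trans (map_zero (qiso p F V).hom.hom).symm)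
    exact LinearMap.mem_ker.mpr this

lemma qmap_nat (F : FF p) {V V' : FGModuleCat.{0} (Kk p)} (g : V ⟶ V') :
    F.map ((addOne p).map g) ≫ qmap p F V' = qmap p F V ≫ ((Delta p).obj F).map g :=
  ((cokernel.π (unitPre p)).app F).naturality g

lemma deltaIter_succ_eq : ∀ n : ℕ, deltaIter p (n + 1) = Delta p ⋙ deltaIter p n
  | 0 => rfl
  | n + 1 => by
    have h := deltaIter_succ_eq n
    show deltaIter p (n + 1) ⋙ Delta p = Delta p ⋙ (deltaIter p n ⋙ Delta p)
    rw [h]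
    rfl

end Stmt14
namespace Stmt14
open CategoryTheory CategoryTheory.Limits
variable (p : ℕ) [Fact p.Prime]

lemma isZero_elem {M : ModuleCat.{0} (Kk p)} (h : IsZero M) (x : M) : x = 0 := by
  have h0 : (𝟙 M : M ⟶ M) = 0 := h.eq_of_src _ _
  calc x = (𝟙 M : M ⟶ M) x := rfl
    _ = (0 : M ⟶ M) x := by rw [h0]
    _ = 0 := rfl

lemma main (n : ℕ) : ∀ F : FF p, IsZero ((deltaIter p (n + 1)).obj F) →
    ∀ V : FGModuleCat.{0} (Kk p),
      (⨆ i : Fin (n + 1), LinearMap.range (F.map ((ee p n i).app V)).hom) = ⊤ := by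
  induction n with
  | zero =>
    intro F h V
    have hz : IsZero (((Delta p).obj F).obj V) :=
      (Functor.isZero_iff ((Delta p).obj F)).mp h V
    rw [eq_top_iff]
    intro y _
    have h0 : qmap p F V y = 0 := isZero_elem p hz _
    have hy : y ∈ LinearMap.range (F.map ((inclOne p).app V)).hom := by
      rw [← qmap_ker]; exact h0
    exact Submodule.mem_iSup_of_mem 0 hy
  | succ n ih =>
    intro F h V
    have h' : IsZero ((deltaIter p (n + 1)).obj ((Delta p).obj F)) := by
      rw [deltaIter_succ_eq p (n + 1)] at h
      exact h
    have IH := ih ((Delta p).obj F) h' V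
    set W := (An p (n + 1)).obj V with hW
    have hmapi : ∀ i : Fin (n + 1),
        LinearMap.range (((Delta p).obj F).map ((ee p n i).app V)).hom =
        Submodule.map (qmap p F W).hom
          (LinearMap.range (F.map ((addOne p).map ((ee p n i).app V))).hom) := by
      intro i
      have hnat := qmap_nat p F ((ee p n i).app V)
      calc LinearMap.range (((Delta p).obj F).map ((ee p n i).app V)).hom
          = Submodule.map (((Delta p).obj F).map ((ee p n i).app V)).hom
              (LinearMap.range (qmap p F ((An p n).obj V)).hom) := by
            rw [LinearMap.range_eq_top.mpr (qmap_surjective p F _), Submodule.map_top]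
        _ = LinearMap.range (qmap p F ((An p n).obj V) ≫
              ((Delta p).obj F).map ((ee p n i).app V)).hom := by
            rw [ModuleCat.hom_comp, LinearMap.range_comp]
        _ = LinearMap.range (F.map ((addOne p).map ((ee p n i).app V)) ≫ qmap p F W).hom := by
            rw [hnat]
        _ = Submodule.map (qmap p F W).hom
              (LinearMap.range (F.map ((addOne p).map ((ee p n i).app V))).hom) := by
            rw [ModuleCat.hom_comp, LinearMap.range_comp]
    rw [eq_top_iff]
    intro y _
    change (F.obj ((addOne p).obj W)).carrier at y
    have hq : qmap p F W y ∈
        (⨆ i : Fin (n + 1), LinearMap.range (((Delta p).obj F).map ((ee p n i).app V)).hom) := by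
      rw [IH]; trivial
    have hmap : (⨆ i : Fin (n + 1), LinearMap.range (((Delta p).obj F).map ((ee p n i).app V)).hom)
        = Submodule.map (qmap p F W).hom
          (⨆ i : Fin (n + 1), LinearMap.range (F.map ((addOne p).map ((ee p n i).app V))).hom) := by
      rw [Submodule.map_iSup]
      exact iSup_congr hmapi
    rw [hmap] at hq
    obtain ⟨z, hz, hzz⟩ := hq
    have hker : y - z ∈ LinearMap.range (F.map ((inclOne p).app W)).hom := by
      rw [← qmap_ker]
      have : qmap p F W (y - z) = 0 := by
        rw [map_sub, hzz, sub_self]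
      exact LinearMap.mem_ker.mpr this
    have hle : (⨆ i : Fin (n + 1),
          LinearMap.range (F.map ((addOne p).map ((ee p n i).app V))).hom)
        ≤ ⨆ i : Fin (n + 2), LinearMap.range (F.map ((ee p (n + 1) i).app V)).hom := by
      refine iSup_le fun i => ?_
      have he : (ee p (n + 1) i.castSucc).app V = (addOne p).map ((ee p n i).app V) := by
        rw [ee_castSucc]; rfl
      rw [← he]
      exact le_iSup (fun i : Fin (n + 2) =>
        LinearMap.range (F.map ((ee p (n + 1) i).app V)).hom) i.castSucc
    have h2 : y - z ∈ ⨆ i : Fin (n + 2),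
        LinearMap.range (F.map ((ee p (n + 1) i).app V)).hom := by
      have he : (ee p (n + 1) (Fin.last (n + 1))).app V = (inclOne p).app W := by
        rw [ee_last]; rfl
      exact Submodule.mem_iSup_of_mem (p := fun i : Fin (n + 2) =>
        LinearMap.range (F.map ((ee p (n + 1) i).app V)).hom) (Fin.last (n + 1)) (he ▸ hker)
    have := Submodule.add_mem _ (hle hz) h2
    exact (add_sub_cancel z y) ▸ this

end Stmt14
namespace Stmt14
open CategoryTheory CategoryTheory.Limits
variable (p : ℕ) [Fact p.Prime]

/-- The "diagonal" map `v ↦ (v, φ v, ..., φ v)`. -/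
def dmap (V : FGModuleCat.{0} (Kk p)) (φ : (V : Type) →ₗ[Kk p] Kk p) :
    (n : ℕ) → (V ⟶ (An p n).obj V)
  | 0 => 𝟙 V
  | n + 1 =>
    FGModuleCat.ofHom (LinearMap.prod (dmap V φ n).hom.hom φ :
      (V : Type) →ₗ[Kk p] (((An p n).obj V : Type) × Kk p))

lemma dmap_injective (V : FGModuleCat.{0} (Kk p)) (φ : (V : Type) →ₗ[Kk p] Kk p) :
    ∀ n : ℕ, Function.Injective
      (dmap p V φ n).hom.hom
  | 0 => fun a b h => h
  | n + 1 => fun a b h => by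
    apply dmap_injective V φ n
    exact congrArg Prod.fst h

/-- The `i`-th added coordinate of `A^n V`. -/
def cproj (V : FGModuleCat.{0} (Kk p)) :
    (n : ℕ) → Fin n → (((An p n).obj V : Type) →ₗ[Kk p] Kk p)
  | 0, i => i.elim0
  | n + 1, i =>
    Fin.lastCases (LinearMap.snd (Kk p) ((An p n).obj V : Type) (Kk p))
      (fun j => (cproj V n j).comp
        (LinearMap.fst (Kk p) ((An p n).obj V : Type) (Kk p))) i

lemma cproj_last (V : FGModuleCat.{0} (Kk p)) (n : ℕ) :
    cproj p V (n + 1) (Fin.last n) = LinearMap.snd (Kk p) ((An p n).obj V : Type) (Kk p) := by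
  unfold cproj; exact Fin.lastCases_last

lemma cproj_castSucc (V : FGModuleCat.{0} (Kk p)) (n : ℕ) (j : Fin n) :
    cproj p V (n + 1) j.castSucc = (cproj p V n j).comp
      (LinearMap.fst (Kk p) ((An p n).obj V : Type) (Kk p)) := by
  rw [cproj.eq_2]; exact Fin.lastCases_castSucc _

lemma cproj_ee (V : FGModuleCat.{0} (Kk p)) :
    ∀ (n : ℕ) (i : Fin (n + 1)) (x : ((An p n).obj V : Type)),
      cproj p V (n + 1) i ((ee p n i).app V x) = 0 := by
  intro n
  induction n with
  | zero =>
    intro i x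
    induction i using Fin.lastCases with
    | last => rw [ee_last, cproj_last]; rfl
    | cast j => exact j.elim0
  | succ n ih =>
    intro i x
    induction i using Fin.lastCases with
    | last => rw [ee_last, cproj_last]; rfl
    | cast j =>
      rw [ee_castSucc, cproj_castSucc]
      exact ih j x.1

lemma cproj_dmap (V : FGModuleCat.{0} (Kk p)) (φ : (V : Type) →ₗ[Kk p] Kk p) :
    ∀ (n : ℕ) (i : Fin (n + 1)) (v : (V : Type)),
      cproj p V (n + 1) i
        ((dmap p V φ (n + 1)).hom.hom v) = φ v := by
  intro n
  induction n with
  | zero =>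
    intro i v
    induction i using Fin.lastCases with
    | last => rw [cproj_last]; rfl
    | cast j => exact j.elim0
  | succ n ih =>
    intro i v
    induction i using Fin.lastCases with
    | last => rw [cproj_last]; rfl
    | cast j =>
      rw [cproj_castSucc]
      exact ih j v

lemma linearCombination_ite {α : Type} [DecidableEq α] (v0 : α) (a : α →₀ Kk p) :
    Finsupp.linearCombination (Kk p) (fun v => if v = v0 then (1 : Kk p) else 0) a = a v0 := by
  rw [Finsupp.linearCombination_apply, Finsupp.sum, Finset.sum_eq_single v0]
  · simp
  · intro b _ hb; simp [hb]
  · intro hb; simp [Finsupp.notMem_support_iff.mp hb]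

end Stmt14
namespace Stmt14
open CategoryTheory CategoryTheory.Limits
variable (p : ℕ) [Fact p.Prime]

lemma partOne (B : FF p) (j : B ⟶ Pbar p) (hj : Mono j) (m : ℕ)
    (hm : IsPolyLE p m B) : IsZero B := by
  haveI := hj
  set u : B ⟶ Pfun p := j ≫ kernel.ι (augP p) with hu
  haveI hmono : Mono u := by haveI : Mono (kernel.ι (augP p)) := equalizer.ι_mono; exact @mono_comp _ _ _ _ _ j hj _ this
  have haug : u ≫ augP p = 0 := by
    rw [hu]; exact (Category.assoc _ _ _).trans ((congrArg (j ≫ ·) (kernel.condition (augP p))).trans comp_zero)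
  rw [Functor.isZero_iff]
  intro V
  have hball : ∀ b : (B.obj V : Type), b = 0 := by
    intro b
    have hinj : Function.Injective (u.app V) := by
      have : Mono (u.app V) := inferInstance
      exact (ModuleCat.mono_iff_injective _).mp this
    apply hinj
    rw [map_zero]
    by_contra hne
    set a : (V : Type) →₀ Kk p := u.app V b with ha
    -- the augmentation of `a` vanishes
    have h1 : u.app V ≫ (augP p).app V = 0 := by
      have h2 := congrArg (fun η => η.app V) haug
      simpa using h2
    have haugVb : Finsupp.linearCombination (Kk p) (fun _ : (V : Type) => (1 : Kk p)) a = 0 := by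
      have h3 := ConcreteCategory.congr_hom h1 b
      rw [CategoryTheory.comp_apply] at h3
      exact h3
    -- find `v0 ≠ 0` with `a v0 ≠ 0`
    have hv0 : ∃ v0 : (V : Type), v0 ≠ 0 ∧ a v0 ≠ 0 := by
      by_contra hcon
      push_neg at hcon
      have hsupp : a.support ⊆ {0} := by
        intro v hv
        rcases eq_or_ne v 0 with h | h
        · simp [h]
        · exact absurd (hcon v h) (Finsupp.mem_support_iff.mp hv)
      have hsingle : a = Finsupp.single 0 (a 0) := Finsupp.support_subset_singleton.mp hsupp
      have h4 : Finsupp.linearCombination (Kk p) (fun _ : (V : Type) => (1 : Kk p))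
          (Finsupp.single (0 : (V : Type)) (a 0)) = a 0 := by
        rw [Finsupp.linearCombination_single]; simp
      rw [← hsingle] at h4
      have h5 : a 0 = 0 := h4.symm.trans haugVb
      have h6 : a = 0 := by rw [hsingle, h5, Finsupp.single_zero]
      exact hne h6
    obtain ⟨v0, hv0ne, hav0⟩ := hv0
    -- a linear functional with `φ v0 = 1`
    have hψ : ¬ ∀ ψ : Module.Dual (Kk p) (V : Type), ψ v0 = 0 := by
      rw [Module.forall_dual_apply_eq_zero_iff]; exact hv0ne
    push_neg at hψ
    obtain ⟨ψ, hψ⟩ := hψ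
    set φ : (V : Type) →ₗ[Kk p] Kk p := (ψ v0)⁻¹ • ψ with hφ
    have hφv0 : φ v0 = 1 := by
      rw [hφ, LinearMap.smul_apply, smul_eq_mul]
      exact inv_mul_cancel₀ hψ
    -- assemble
    have hmain := main p m B hm V
    set W := (An p (m + 1)).obj V with hW
    set f : V ⟶ W := dmap p V φ (m + 1) with hf
    set fv0 : ↥W := f.hom.hom v0 with hfv0
    classical
    set t : ↥W → Kk p := fun w => if w = fv0 then 1 else 0 with ht
    set θ : (↥W →₀ Kk p) →ₗ[Kk p] Kk p := Finsupp.linearCombination (Kk p) t with hθ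
    have hzero : ∀ (i : Fin (m + 1)) (x : (B.obj ((An p m).obj V) : Type)),
        θ (u.app W (B.map ((ee p m i).app V) x)) = 0 := by
      intro i x
      have hnat : u.app W (B.map ((ee p m i).app V) x)
          = (Pfun p).map ((ee p m i).app V) (u.app ((An p m).obj V) x) := by
        have h3 := ConcreteCategory.congr_hom (u.naturality ((ee p m i).app V)) x
        rw [CategoryTheory.comp_apply, CategoryTheory.comp_apply] at h3
        exact h3
      rw [hnat, hθ,
        show (Pfun p).map ((ee p m i).app V)
          = ModuleCat.ofHom (Finsupp.lmapDomain (Kk p) (Kk p) ((ee p m i).app V).hom.hom) from rfl,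
        ]
      erw [Finsupp.lmapDomain_apply, Finsupp.linearCombination_mapDomain]
      have hte : (t ∘ ((ee p m i).app V).hom.hom) = fun _ => (0 : Kk p) := by
        funext z
        simp only [Function.comp_apply, ht]
        rw [if_neg]
        intro hcon
        have h4 := cproj_ee p V m i z
        rw [show (ee p m i).app V z = fv0 from hcon] at h4
        have h5 : cproj p V (m + 1) i fv0 = 1 := by
          rw [hfv0, hf, cproj_dmap]; exact hφv0
        rw [h5] at h4
        exact one_ne_zero h4
      rw [hte]
      exact LinearMap.congr_fun (Finsupp.linearCombination_zero _ _ (Kk p)) _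
    have hLzero : θ (u.app W (B.map f b)) = 0 := by
      have hy : B.map f b ∈
          (⨆ i : Fin (m + 1), LinearMap.range (B.map ((ee p m i).app V)).hom) := by
        rw [hmain]; trivial
      set L : (B.obj W : Type) →ₗ[Kk p] Kk p :=
        θ.comp (u.app W).hom with hL
      have hker : (⨆ i : Fin (m + 1), LinearMap.range (B.map ((ee p m i).app V)).hom)
          ≤ LinearMap.ker L := by
        refine iSup_le fun i => ?_
        rintro _ ⟨x, rfl⟩
        exact LinearMap.mem_ker.mpr (hzero i x)
      exact LinearMap.mem_ker.mp (hker hy)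
    have hval : θ (u.app W (B.map f b)) = a v0 := by
      have hnat : u.app W (B.map f b) = (Pfun p).map f (u.app V b) := by
        have h3 := ConcreteCategory.congr_hom (u.naturality f) b
        rw [CategoryTheory.comp_apply, CategoryTheory.comp_apply] at h3
        exact h3
      rw [hnat, ← ha, hθ,
        show (Pfun p).map f = ModuleCat.ofHom (Finsupp.lmapDomain (Kk p) (Kk p) f.hom.hom) from rfl,
        ]
      erw [Finsupp.lmapDomain_apply, Finsupp.linearCombination_mapDomain]
      have htf : (t ∘ f.hom.hom)
          = fun v => if v = v0 then (1 : Kk p) else 0 := by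
        funext v
        simp only [Function.comp_apply, ht]
        by_cases hv : v = v0
        · rw [if_pos, if_pos hv]
          rw [hv, hfv0]
        · rw [if_neg, if_neg hv]
          intro hcon
          exact hv (dmap_injective p V φ (m + 1) (by rw [hf] at hcon; exact hcon))
      rw [htf, linearCombination_ite]
    exact hav0 (hval.symm.trans hLzero)
  have : Subsingleton (B.obj V : Type) := ⟨fun x y => by rw [hball x, hball y]⟩
  exact ModuleCat.isZero_of_subsingleton _

end Stmt14
/-- `P̄` has no nonzero polynomial subfunctors: any subfunctor of `P̄`
that is polynomial of some finite degree is zero; equivalently `p_n P̄ = 0` for all `n`. -/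
theorem stmt_14 (p : ℕ) [Fact p.Prime] :
    (∀ (A : FF p) (j : A ⟶ Pbar p), Mono j → (∃ m : ℕ, IsPolyLE p m A) → IsZero A) ∧
    (∀ (n : ℕ) (V : FGModuleCat.{0} (Kk p)), pSub p n (Pbar p) V = ⊥) := by
  constructor
  · rintro A j hmono ⟨m, hm⟩
    exact Stmt14.partOne p A j hmono m hm
  · intro n V
    refine le_antisymm ?_ bot_le
    unfold pSub
    refine iSup_le fun A => iSup_le fun j => iSup_le fun hj => iSup_le fun hpol => ?_
    have hz := Stmt14.partOne p A j hj n hpol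
    rintro _ ⟨x, rfl⟩
    have hx : x = 0 := Stmt14.isZero_elem p ((Functor.isZero_iff A).mp hz V) x
    rw [hx, map_zero]
    exact Submodule.zero_mem ⊥
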